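/- For all LTL formulas φ₁, φ₂ and every infinite word ρ: if ρ ⊨ G(φ₁ U φ₂) then ρ ⊨ G(φ₁ ∨ φ₂) ∧ Fφ₂. Conversely, for every nonempty finite word σ, if the cyclic word σ^ω satisfies G(φ₁ ∨ φ₂) ∧ Fφ₂ then σ^ω ⊨ G(φ₁ U φ₂). -/

import Mathlib

/-- Syntax of LTL formulas (with general negation, next, until, weak until). -/
inductive LTL (AP : Type) : Type where
  | tru : LTL AP
  | atom : AP → LTL AP
  | neg : LTL AP → LTL AP
  | conj : LTL AP → LTL AP → LTL AP
  | disj : LTL AP → LTL AP → LTL AP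
  | next : LTL AP → LTL AP
  | untl : LTL AP → LTL AP → LTL AP
  | wuntl : LTL AP → LTL AP → LTL AP

/-- Infinite words over the alphabet `2^AP`. -/
def Word (AP : Type) := ℕ → Set AP

/-- The suffix `ρ[i..]` of an infinite word. -/
def Word.suffix {AP : Type} (ρ : Word AP) (i : ℕ) : Word AP := fun n => ρ (n + i)

/-- Satisfaction of an LTL formula on an infinite word. -/
def sat {AP : Type} : Word AP → LTL AP → Prop
  | _, .tru => True
  | ρ, .atom a => a ∈ ρ 0
  | ρ, .neg φ => ¬ sat ρ φ
  | ρ, .conj φ ψ => sat ρ φ ∧ sat ρ ψ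
  | ρ, .disj φ ψ => sat ρ φ ∨ sat ρ ψ
  | ρ, .next φ => sat (ρ.suffix 1) φ
  | ρ, .untl φ ψ => ∃ i, sat (ρ.suffix i) ψ ∧ ∀ j < i, sat (ρ.suffix j) φ
  | ρ, .wuntl φ ψ =>
      (∀ i, sat (ρ.suffix i) φ) ∨ ∃ i, sat (ρ.suffix i) ψ ∧ ∀ j < i, sat (ρ.suffix j) φ

/-- Eventually: `F φ = ⊤ U φ`. -/
def LTL.ev {AP : Type} (φ : LTL AP) : LTL AP := LTL.untl LTL.tru φ

/-- Always: `G φ = φ W ⊥`. -/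
def LTL.alw {AP : Type} (φ : LTL AP) : LTL AP := LTL.wuntl φ (LTL.neg LTL.tru)

/-- Semantic equivalence of formulas on all infinite words. -/
def LTLequiv {AP : Type} (φ ψ : LTL AP) : Prop := ∀ ρ : Word AP, sat ρ φ ↔ sat ρ ψ

/-- Prepend a finite word `l` to an infinite word `ρ`. -/
def prepend {AP : Type} (l : List (Set AP)) (ρ : Word AP) : Word AP :=
  fun i => if h : i < l.length then l.get ⟨i, h⟩ else ρ (i - l.length)

/-- A fairness formula: satisfaction is closed under suffixes and under prepending
arbitrary finite prefixes. -/
def Fairness {AP : Type} (φ : LTL AP) : Prop :=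
  (∀ ρ : Word AP, sat ρ φ → ∀ i, sat (ρ.suffix i) φ) ∧
  (∀ ρ : Word AP, sat ρ φ → ∀ ρ₁ : List (Set AP), sat (prepend ρ₁ ρ) φ)

/-- The cyclic (periodic) word `σ^ω` obtained by repeating a nonempty finite word `σ`. -/
def cyc {AP : Type} (σ : List (Set AP)) (h : σ ≠ []) : Word AP :=
  fun i => σ.get ⟨i % σ.length, Nat.mod_lt i (List.length_pos_iff.mpr h)⟩

/-- Propositional formulas: atoms and negated atoms combined with `∧`, `∨`. -/
inductive PropForm (AP : Type) : Type where
  | atom : AP → PropForm AP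
  | natom : AP → PropForm AP
  | conj : PropForm AP → PropForm AP → PropForm AP
  | disj : PropForm AP → PropForm AP → PropForm AP

/-- Satisfaction of a propositional formula at a single letter `A ∈ 2^AP`. -/
def psat {AP : Type} (A : Set AP) : PropForm AP → Prop
  | .atom a => a ∈ A
  | .natom a => a ∉ A
  | .conj l₁ l₂ => psat A l₁ ∧ psat A l₂
  | .disj l₁ l₂ => psat A l₁ ∨ psat A l₂

/-- Embedding of propositional formulas into LTL. -/
def PropForm.toLTL {AP : Type} : PropForm AP → LTL AP
  | .atom a => .atom a
  | .natom a => .neg (.atom a)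
  | .conj l₁ l₂ => .conj l₁.toLTL l₂.toLTL
  | .disj l₁ l₂ => .disj l₁.toLTL l₂.toLTL

/-- A finite Kripke structure with a total transition relation. -/
structure Kripke (AP : Type) where
  S : Type
  [fin : Fintype S]
  init : S
  T : S → S → Prop
  total : ∀ s, ∃ t, T s t
  L : S → Set AP

/-- `π` is an infinite path of `K` starting at the initial state. -/
def Kripke.IsPath {AP : Type} (K : Kripke AP) (π : ℕ → K.S) : Prop :=
  π 0 = K.init ∧ ∀ i, K.T (π i) (π (i + 1))

/-- There is a nonempty finite path from `s` to `t` staying inside `B`. -/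
def Kripke.ConnIn {AP : Type} (K : Kripke AP) (B : Set K.S) (s t : K.S) : Prop :=
  ∃ n > 0, ∃ f : ℕ → K.S, f 0 = s ∧ f n = t ∧
    (∀ i < n, K.T (f i) (f (i + 1))) ∧ (∀ i ≤ n, f i ∈ B)

/-- `B` is a nontrivial strongly connected set of states. -/
def Kripke.IsSCSet {AP : Type} (K : Kripke AP) (B : Set K.S) : Prop :=
  ∀ s ∈ B, ∀ t ∈ B, K.ConnIn B s t

/-- Some state of `B` is reachable from the initial state. -/
def Kripke.Reachable {AP : Type} (K : Kripke AP) (B : Set K.S) : Prop :=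
  ∃ s ∈ B, ∃ n, ∃ f : ℕ → K.S, f 0 = K.init ∧ f n = s ∧ ∀ i < n, K.T (f i) (f (i + 1))

/-- The periodic word `({a}{}{a,c})^ω`. -/
def word1 {AP : Type} (a c : AP) : Word AP :=
  fun i => if i % 3 = 0 then {a} else if i % 3 = 1 then ∅ else {a, c}

/-- The periodic word `({a}{a,c}{})^ω`. -/
def word2 {AP : Type} (a c : AP) : Word AP :=
  fun i => if i % 3 = 0 then {a} else if i % 3 = 1 then {a, c} else ∅
lemma suffix_suffix' {AP : Type} (ρ : Word AP) (i j : ℕ) :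
    (ρ.suffix i).suffix j = ρ.suffix (j + i) := by
  funext n; simp [Word.suffix, Nat.add_assoc]

lemma cyc_suffix_len {AP : Type} (σ : List (Set AP)) (h : σ ≠ []) (k : ℕ) :
    (cyc σ h).suffix (k + σ.length) = (cyc σ h).suffix k := by
  funext n
  unfold Word.suffix cyc
  congr 1
  apply Fin.ext
  show (n + (k + σ.length)) % σ.length = (n + k) % σ.length
  rw [← Nat.add_assoc, Nat.add_mod_right]

lemma cyc_suffix_mul {AP : Type} (σ : List (Set AP)) (h : σ ≠ []) (k m : ℕ) :
    (cyc σ h).suffix (k + σ.length * m) = (cyc σ h).suffix k := by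
  induction m with
  | zero => simp
  | succ m ih => rw [Nat.mul_succ, ← Nat.add_assoc, cyc_suffix_len, ih]

/-- G(φ₁ U φ₂) implies G(φ₁ ∨ φ₂) ∧ Fφ₂ on every word; on cyclic words the
converse implication also holds. -/
theorem G_until_c {AP : Type} (φ₁ φ₂ : LTL AP) :
    (∀ ρ : Word AP, sat ρ (φ₁.untl φ₂).alw →
       sat ρ (LTL.conj (φ₁.disj φ₂).alw φ₂.ev)) ∧
    (∀ (σ : List (Set AP)) (h : σ ≠ []),
       sat (cyc σ h) (LTL.conj (φ₁.disj φ₂).alw φ₂.ev) →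
       sat (cyc σ h) (φ₁.untl φ₂).alw) := by
  constructor
  · intro ρ hG
    simp only [LTL.alw, LTL.ev, sat] at *
    rcases hG with hG | ⟨i, hi, _⟩
    · constructor
      · left
        intro i
        obtain ⟨k, hk2, hk1⟩ := hG i
        rcases Nat.eq_zero_or_pos k with rfl | hk
        · right
          simpa [suffix_suffix'] using hk2
        · left
          have := hk1 0 hk
          simpa [suffix_suffix'] using this
      · obtain ⟨k, hk2, _⟩ := hG 0
        refine ⟨k, ?_, fun j _ => trivial⟩
        rw [suffix_suffix'] at hk2
        simpa using hk2
    · exact absurd hi (by simp)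
  · intro σ h hsat
    simp only [LTL.alw, LTL.ev, sat] at *
    rcases hsat with ⟨hdisj | ⟨i, hi, _⟩, hF⟩
    swap
    · exact absurd hi (by simp)
    obtain ⟨k, hk, -⟩ := hF
    left
    intro i
    set L := σ.length with hL
    have hLpos : 0 < L := List.length_pos_iff.mpr h
    -- φ₂ holds at position t := k + L * (i + 1) ≥ i
    set t := k + L * (i + 1) with ht
    have hti : i ≤ t := by
      have : i + 1 ≤ L * (i + 1) := Nat.le_mul_of_pos_left _ hLpos
      omega
    have ht2 : sat ((cyc σ h).suffix t) φ₂ := by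
      rw [ht, cyc_suffix_mul]; exact hk
    haveI := Classical.decPred (fun m => sat ((cyc σ h).suffix (m + i)) φ₂)
    have hex : ∃ m, sat ((cyc σ h).suffix (m + i)) φ₂ := by
      refine ⟨t - i, ?_⟩
      rwa [Nat.sub_add_cancel hti]
    refine ⟨Nat.find hex, ?_, ?_⟩
    · rw [suffix_suffix']
      exact Nat.find_spec hex
    · intro j hj
      rw [suffix_suffix']
      have hnot := Nat.find_min hex hj
      have := hdisj (j + i)
      tauto
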